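/- Let E and F be complex Hilbert spaces and let T be a densely defined closable linear operator from E to F with closure T̄. Define S in E × F with domain D(T) × D(T*) by S(x, y) = (T*y, Tx). Then the operator SS* is the diagonal block operator with entries T*T̄ and TT*: its domain is D(T*T̄) × D(TT*) and SS*(x, y) = (T*(T̄x), T(T*y)). -/

import Mathlib

namespace LinearPMap

section Pcomp

variable {R E F G : Type*} [CommRing R]
  [AddCommGroup E] [Module R E]
  [AddCommGroup F] [Module R F]
  [AddCommGroup G] [Module R G]

/-- Composition of partially defined linear maps (unbounded operators), with the natural
domain `D(A ∘ B) = {x ∈ D(B) : B x ∈ D(A)}`, sending `x` to `A (B x)`. -/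
noncomputable def pcomp (A : F →ₗ.[R] G) (B : E →ₗ.[R] F) : E →ₗ.[R] G where
  domain := (A.domain.comap B.toFun).map B.domain.subtype
  toFun := A.toFun.comp <|
    (LinearMap.codRestrict A.domain
        (B.toFun.comp (A.domain.comap B.toFun).subtype) fun x => x.2).comp
      (Submodule.equivMapOfInjective B.domain.subtype
        (Submodule.injective_subtype _) (A.domain.comap B.toFun)).symm.toLinearMap

theorem mem_pcomp_domain {A : F →ₗ.[R] G} {B : E →ₗ.[R] F} {x : E} :
    x ∈ (A.pcomp B).domain ↔ ∃ hx : x ∈ B.domain, B ⟨x, hx⟩ ∈ A.domain := by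
  constructor
  · rintro ⟨y, hy, rfl⟩
    exact ⟨y.2, by simpa using hy⟩
  · rintro ⟨hx, hx'⟩
    exact ⟨⟨x, hx⟩, hx', rfl⟩

theorem pcomp_apply {A : F →ₗ.[R] G} {B : E →ₗ.[R] F} (x : (A.pcomp B).domain)
    (hx : (x : E) ∈ B.domain) (hx' : B ⟨(x : E), hx⟩ ∈ A.domain) :
    (A.pcomp B) x = A ⟨B ⟨(x : E), hx⟩, hx'⟩ := by
  set e := (Submodule.equivMapOfInjective B.domain.subtype
    (Submodule.injective_subtype _) (A.domain.comap B.toFun)) with he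
  have hy : (((e.symm x : _) : B.domain) : E) = (x : E) := by
    conv_rhs => rw [← e.apply_symm_apply x]
    rfl
  have h2 : ((e.symm x : _) : B.domain) = ⟨(x : E), hx⟩ := Subtype.ext hy
  show A.toFun _ = A.toFun _
  congr 1
  exact Subtype.ext (congrArg B.toFun h2)

end Pcomp

end LinearPMap

section Block

variable {E F : Type*}
  [NormedAddCommGroup E] [InnerProductSpace ℂ E]
  [NormedAddCommGroup F] [InnerProductSpace ℂ F]

namespace LinearPMap

/-- The off-diagonal block operator `(x, y) ↦ (B y, A x)` on the Hilbert space
`WithLp 2 (E × F)` (the product `E × F` with the inner product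
`⟨(x₁,y₁),(x₂,y₂)⟩ = ⟨x₁,x₂⟩ + ⟨y₁,y₂⟩`), with domain `D(A) × D(B)`. -/
noncomputable def blockOffDiag (A : E →ₗ.[ℂ] F) (B : F →ₗ.[ℂ] E) :
    WithLp 2 (E × F) →ₗ.[ℂ] WithLp 2 (E × F) where
  domain := (A.domain.prod B.domain).comap (WithLp.linearEquiv 2 ℂ (E × F)).toLinearMap
  toFun :=
    (WithLp.linearEquiv 2 ℂ (E × F)).symm.toLinearMap.comp <|
      LinearMap.prod
        (B.toFun.comp <| LinearMap.codRestrict B.domain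
          ((LinearMap.snd ℂ E F).comp ((WithLp.linearEquiv 2 ℂ (E × F)).toLinearMap.comp
            ((A.domain.prod B.domain).comap
              (WithLp.linearEquiv 2 ℂ (E × F)).toLinearMap).subtype))
          fun x => x.2.2)
        (A.toFun.comp <| LinearMap.codRestrict A.domain
          ((LinearMap.fst ℂ E F).comp ((WithLp.linearEquiv 2 ℂ (E × F)).toLinearMap.comp
            ((A.domain.prod B.domain).comap
              (WithLp.linearEquiv 2 ℂ (E × F)).toLinearMap).subtype))
          fun x => x.2.1)

/-- The diagonal block operator `(x, y) ↦ (A x, C y)` on the Hilbert space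
`WithLp 2 (E × F)`, with domain `D(A) × D(C)`. -/
noncomputable def blockDiag (A : E →ₗ.[ℂ] E) (C : F →ₗ.[ℂ] F) :
    WithLp 2 (E × F) →ₗ.[ℂ] WithLp 2 (E × F) where
  domain := (A.domain.prod C.domain).comap (WithLp.linearEquiv 2 ℂ (E × F)).toLinearMap
  toFun :=
    (WithLp.linearEquiv 2 ℂ (E × F)).symm.toLinearMap.comp <|
      LinearMap.prod
        (A.toFun.comp <| LinearMap.codRestrict A.domain
          ((LinearMap.fst ℂ E F).comp ((WithLp.linearEquiv 2 ℂ (E × F)).toLinearMap.comp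
            ((A.domain.prod C.domain).comap
              (WithLp.linearEquiv 2 ℂ (E × F)).toLinearMap).subtype))
          fun x => x.2.1)
        (C.toFun.comp <| LinearMap.codRestrict C.domain
          ((LinearMap.snd ℂ E F).comp ((WithLp.linearEquiv 2 ℂ (E × F)).toLinearMap.comp
            ((A.domain.prod C.domain).comap
              (WithLp.linearEquiv 2 ℂ (E × F)).toLinearMap).subtype))
          fun x => x.2.2)

end LinearPMap

end Block

open scoped LinearPMap

section Aux
variable {E F : Type*}
  [NormedAddCommGroup E] [InnerProductSpace ℂ E]
  [NormedAddCommGroup F] [InnerProductSpace ℂ F]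

namespace LinearPMap

theorem mem_blockOffDiag_domain {A : E →ₗ.[ℂ] F} {B : F →ₗ.[ℂ] E} {z : WithLp 2 (E × F)} :
    z ∈ (A.blockOffDiag B).domain ↔ z.fst ∈ A.domain ∧ z.snd ∈ B.domain := Iff.rfl

theorem blockOffDiag_apply {A : E →ₗ.[ℂ] F} {B : F →ₗ.[ℂ] E} (z : (A.blockOffDiag B).domain) :
    (A.blockOffDiag B) z =
      (WithLp.equiv 2 (E × F)).symm (B ⟨(z : WithLp 2 (E × F)).snd, z.2.2⟩,
        A ⟨(z : WithLp 2 (E × F)).fst, z.2.1⟩) := rfl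

theorem blockOffDiag_apply' {A : E →ₗ.[ℂ] F} {B : F →ₗ.[ℂ] E}
    (z : (A.blockOffDiag B).domain) {x : A.domain} {y : B.domain}
    (hx : (z : WithLp 2 (E × F)).fst = x) (hy : (z : WithLp 2 (E × F)).snd = y) :
    (A.blockOffDiag B) z = (WithLp.equiv 2 (E × F)).symm (B y, A x) := by
  rw [blockOffDiag_apply]
  congr 2
  · exact congrArg (fun t => B t) (Subtype.ext hy)
  · exact congrArg (fun t => A t) (Subtype.ext hx)

theorem mem_blockDiag_domain {A : E →ₗ.[ℂ] E} {C : F →ₗ.[ℂ] F} {z : WithLp 2 (E × F)} :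
    z ∈ (A.blockDiag C).domain ↔ z.fst ∈ A.domain ∧ z.snd ∈ C.domain := Iff.rfl

theorem blockDiag_apply {A : E →ₗ.[ℂ] E} {C : F →ₗ.[ℂ] F} (z : (A.blockDiag C).domain) :
    (A.blockDiag C) z =
      (WithLp.equiv 2 (E × F)).symm (A ⟨(z : WithLp 2 (E × F)).fst, z.2.1⟩,
        C ⟨(z : WithLp 2 (E × F)).snd, z.2.2⟩) := rfl

end LinearPMap
theorem aux_pcomp_block (A A' : E →ₗ.[ℂ] F) (B : F →ₗ.[ℂ] E) :
    (A.blockOffDiag B).pcomp (A'.blockOffDiag B)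
      = LinearPMap.blockDiag (B.pcomp A') (A.pcomp B) := by
  apply LinearPMap.ext
  · ext z
    simp only [LinearPMap.mem_pcomp_domain, LinearPMap.mem_blockDiag_domain,
      LinearPMap.mem_blockOffDiag_domain]
    constructor
    · rintro ⟨hz, hz'⟩
      exact ⟨⟨hz.1, hz'.2⟩, ⟨hz.2, hz'.1⟩⟩
    · rintro ⟨⟨h1, h1'⟩, ⟨h2, h2'⟩⟩
      exact ⟨⟨h1, h2⟩, ⟨h2', h1'⟩⟩
  · intro z₀ hz₁ hz₂
    set x : ((A.blockOffDiag B).pcomp (A'.blockOffDiag B)).domain := ⟨z₀, hz₁⟩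
    set y : ((B.pcomp A').blockDiag (A.pcomp B)).domain := ⟨z₀, hz₂⟩
    have hxy : (x : WithLp 2 (E × F)) = y := rfl
    clear_value x y
    obtain ⟨hz, hz'⟩ := LinearPMap.mem_pcomp_domain.mp x.2
    obtain ⟨⟨k1, k1'⟩, ⟨k2, k2'⟩⟩ :
        (∃ h : (y : WithLp 2 (E × F)).fst ∈ A'.domain,
            A' ⟨(y : WithLp 2 (E × F)).fst, h⟩ ∈ B.domain) ∧
        (∃ h : (y : WithLp 2 (E × F)).snd ∈ B.domain,
            B ⟨(y : WithLp 2 (E × F)).snd, h⟩ ∈ A.domain) := by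
      have := y.2
      exact ⟨LinearPMap.mem_pcomp_domain.mp this.1, LinearPMap.mem_pcomp_domain.mp this.2⟩
    rw [LinearPMap.pcomp_apply x hz hz']
    rw [LinearPMap.blockOffDiag_apply' ⟨_, hz'⟩
      (x := ⟨B ⟨(x : WithLp 2 (E × F)).snd, hz.2⟩, hz'.1⟩)
      (y := ⟨A' ⟨(x : WithLp 2 (E × F)).fst, hz.1⟩, hz'.2⟩) rfl rfl]
    rw [LinearPMap.blockDiag_apply y]
    rw [LinearPMap.pcomp_apply ⟨(y : WithLp 2 (E × F)).fst, y.2.1⟩ k1 k1']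
    rw [LinearPMap.pcomp_apply ⟨(y : WithLp 2 (E × F)).snd, y.2.2⟩ k2 k2']
    have efst : (x : WithLp 2 (E × F)).fst = (y : WithLp 2 (E × F)).fst := by rw [hxy]
    have esnd : (x : WithLp 2 (E × F)).snd = (y : WithLp 2 (E × F)).snd := by rw [hxy]
    have c1 : A' ⟨(x : WithLp 2 (E × F)).fst, hz.1⟩ = A' ⟨(y : WithLp 2 (E × F)).fst, k1⟩ :=
      congrArg (fun t => A' t) (Subtype.ext efst)
    have c2 : B ⟨(x : WithLp 2 (E × F)).snd, hz.2⟩ = B ⟨(y : WithLp 2 (E × F)).snd, k2⟩ :=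
      congrArg (fun t => B t) (Subtype.ext esnd)
    have d1 : B ⟨A' ⟨(x : WithLp 2 (E × F)).fst, hz.1⟩, hz'.2⟩
        = B ⟨A' ⟨(y : WithLp 2 (E × F)).fst, k1⟩, k1'⟩ :=
      congrArg (fun t => B t) (Subtype.ext c1)
    have d2 : A ⟨B ⟨(x : WithLp 2 (E × F)).snd, hz.2⟩, hz'.1⟩
        = A ⟨B ⟨(y : WithLp 2 (E × F)).snd, k2⟩, k2'⟩ :=
      congrArg (fun t => A t) (Subtype.ext c2)
    rw [d1, d2]

end Aux
open scoped LinearPMap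
local notation "⟪" x ", " y "⟫" => @inner ℂ _ _ x y
section XX
variable {E F : Type*}
  [NormedAddCommGroup E] [InnerProductSpace ℂ E] [CompleteSpace E]
  [NormedAddCommGroup F] [InnerProductSpace ℂ F] [CompleteSpace F]
  {T : E →ₗ.[ℂ] F}

theorem aux_inner_adjoint_closure (hT : Dense (T.domain : Set E)) (hcl : T.IsClosable)
    (y : T†.domain) (u : T.closure.domain) :
    ⟪((T† y : E) : E), ((u : E) : E)⟫ = ⟪(y : F), T.closure u⟫ := by
  have hset : IsClosed {p : E × F | ⟪(T† y : E), p.1⟫ = ⟪(y : F), p.2⟫} := by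
    apply isClosed_eq
    · exact (innerSL ℂ ((T† y : E))).continuous.comp continuous_fst
    · exact (innerSL ℂ ((y : F))).continuous.comp continuous_snd
  have hsub : (T.graph : Set (E × F)) ⊆ {p : E × F | ⟪(T† y : E), p.1⟫ = ⟪(y : F), p.2⟫} := by
    rintro p hp
    rw [SetLike.mem_coe, LinearPMap.mem_graph_iff] at hp
    obtain ⟨x, hx1, hx2⟩ := hp
    simp only [Set.mem_setOf_eq, ← hx1, ← hx2]
    exact LinearPMap.adjoint_isFormalAdjoint hT y x
  have hmem : ((u : E), T.closure u) ∈ T.closure.graph := T.closure.mem_graph u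
  rw [← hcl.graph_closure_eq_closure_graph] at hmem
  have hcl2 : ((u : E), T.closure u) ∈ closure (T.graph : Set (E × F)) := by
    have h2 : (T.graph.topologicalClosure : Set (E × F)) = closure (T.graph : Set (E × F)) :=
      Submodule.topologicalClosure_coe _
    rw [← h2]
    exact hmem
  exact closure_minimal hsub hset hcl2

theorem aux_vonNeumann (hT : Dense (T.domain : Set E)) (hcl : T.IsClosable)
    {x₀ : E} {z : F} (h : ∀ y : T†.domain, ⟪(y : F), z⟫ = ⟪((T† y : E) : E), x₀⟫) :
    (x₀, z) ∈ T.closure.graph := by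
  classical
  set e := WithLp.linearEquiv 2 ℂ (E × F) with he
  set g : Submodule ℂ (WithLp 2 (E × F)) := T.graph.comap e.toLinearMap with hg
  have hmem : e.symm (x₀, z) ∈ gᗮᗮ := by
    rw [Submodule.mem_orthogonal]
    intro w hw
    rw [Submodule.mem_orthogonal'] at hw
    set a := (e w).1 with ha
    set b := (e w).2 with hb
    have key : ∀ x : T.domain, ⟪a, ((x : E) : E)⟫ + ⟪b, T x⟫ = 0 := by
      intro x
      have hv : e.symm ((x : E), T x) ∈ g := by
        simp only [hg, Submodule.mem_comap, LinearEquiv.coe_coe, LinearEquiv.apply_symm_apply]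
        exact T.mem_graph x
      have h0 := hw _ hv
      rw [WithLp.prod_inner_apply] at h0
      exact h0
    have key2 : ∀ x : T.domain, ⟪-a, ((x : E) : E)⟫ = ⟪b, T x⟫ := by
      intro x
      have := key x
      rw [inner_neg_left]
      linear_combination -this
    have hbmem : b ∈ T†.domain :=
      LinearPMap.mem_adjoint_domain_of_exists _ ⟨-a, key2⟩
    have hTb : T† ⟨b, hbmem⟩ = -a :=
      LinearPMap.adjoint_apply_eq hT _ key2
    have hz := h ⟨b, hbmem⟩
    rw [WithLp.prod_inner_apply]
    have hfst : (w : WithLp 2 (E × F)).fst = a := rfl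
    have hsnd : (w : WithLp 2 (E × F)).snd = b := rfl
    have hpfst : (e.symm (x₀, z) : WithLp 2 (E × F)).fst = x₀ := rfl
    have hpsnd : (e.symm (x₀, z) : WithLp 2 (E × F)).snd = z := rfl
    change ⟪a, x₀⟫ + ⟪b, z⟫ = 0
    simp only [hTb] at hz
    rw [hz]
    simp [inner_neg_left]
  rw [Submodule.orthogonal_orthogonal_eq_closure] at hmem
  have hmem2 : e.symm (x₀, z) ∈ closure (g : Set (WithLp 2 (E × F))) := by
    have h2 : (g.topologicalClosure : Set (WithLp 2 (E × F))) = closure (g : Set _) :=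
      Submodule.topologicalClosure_coe _
    rw [← h2]; exact hmem
  have hc := (WithLp.prodContinuousLinearEquiv 2 ℂ E F).toHomeomorph.image_closure
    (g : Set (WithLp 2 (E × F)))
  have hgset : (WithLp.prodContinuousLinearEquiv 2 ℂ E F) '' (g : Set (WithLp 2 (E × F)))
      = (T.graph : Set (E × F)) := by
    have : (g : Set (WithLp 2 (E × F)))
        = (WithLp.prodContinuousLinearEquiv 2 ℂ E F) ⁻¹' (T.graph : Set (E × F)) := rfl
    rw [this, Set.image_preimage_eq _ (WithLp.prodContinuousLinearEquiv 2 ℂ E F).surjective]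
  have hfin : (x₀, z) ∈ closure (T.graph : Set (E × F)) := by
    have h3 := Set.mem_image_of_mem (⇑(WithLp.prodContinuousLinearEquiv 2 ℂ E F).toHomeomorph) hmem2
    rw [hc] at h3
    have h4 : (⇑(WithLp.prodContinuousLinearEquiv 2 ℂ E F).toHomeomorph '' (g : Set (WithLp 2 (E × F)))) = (T.graph : Set (E × F)) := hgset
    rw [h4] at h3
    exact h3
  have h2 : (T.graph.topologicalClosure : Set (E × F)) = closure (T.graph : Set _) :=
    Submodule.topologicalClosure_coe _
  rw [← hcl.graph_closure_eq_closure_graph]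
  rw [← h2] at hfin
  exact hfin


theorem aux_dense_adjoint_domain (hT : Dense (T.domain : Set E)) (hcl : T.IsClosable) :
    Dense (T†.domain : Set F) := by
  rw [Submodule.dense_iff_topologicalClosure_eq_top, Submodule.topologicalClosure_eq_top_iff]
  rw [Submodule.eq_bot_iff]
  intro v hv
  rw [Submodule.mem_orthogonal] at hv
  have h : ∀ y : T†.domain, ⟪(y : F), v⟫ = ⟪((T† y : E) : E), (0 : E)⟫ := by
    intro y
    rw [inner_zero_right]
    exact hv _ y.2
  have := aux_vonNeumann hT hcl h
  exact T.closure.graph_fst_eq_zero_snd this rfl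

theorem aux_S_dense (hT : Dense (T.domain : Set E)) (hcl : T.IsClosable) :
    Dense (((T.blockOffDiag (LinearPMap.adjoint T)).domain : Set (WithLp 2 (E × F)))) := by
  have hT' := aux_dense_adjoint_domain hT hcl
  set c := WithLp.prodContinuousLinearEquiv 2 ℂ E F
  have hset : ((T.blockOffDiag T†).domain : Set (WithLp 2 (E × F)))
      = ⇑c.toHomeomorph ⁻¹' ((T.domain : Set E) ×ˢ (T†.domain : Set F)) := rfl
  rw [dense_iff_closure_eq, hset, ← Homeomorph.preimage_closure,
    closure_prod_eq, hT.closure_eq, hT'.closure_eq]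
  simp

theorem aux_adjoint_eq (hT : Dense (T.domain : Set E)) (hcl : T.IsClosable) :
    (T.blockOffDiag T†)† = T.closure.blockOffDiag T† := by
  have hS := aux_S_dense hT hcl
  apply le_antisymm
  · -- S† ≤ R
    have hkey : ∀ w : ((T.blockOffDiag T†)†).domain,
        ∃ (h1 : (w : WithLp 2 (E × F)).fst ∈ T.closure.domain)
          (h2 : (w : WithLp 2 (E × F)).snd ∈ T†.domain),
          T.closure ⟨(w : WithLp 2 (E × F)).fst, h1⟩ = ((T.blockOffDiag T†)† w).snd ∧
          T† ⟨(w : WithLp 2 (E × F)).snd, h2⟩ = ((T.blockOffDiag T†)† w).fst := by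
      intro w
      set p := (T.blockOffDiag T†)† w with hp
      have hform := LinearPMap.adjoint_isFormalAdjoint hS w
      -- (i) snd component
      have hi : ∀ x : T.domain, ⟪p.fst, ((x : E) : E)⟫ = ⟪(w : WithLp 2 (E × F)).snd, T x⟫ := by
        intro x
        have hzmem : ((WithLp.equiv 2 (E × F)).symm ((x : E), (0 : F)))
            ∈ (T.blockOffDiag T†).domain := ⟨x.2, Submodule.zero_mem _⟩
        have := hform ⟨_, hzmem⟩
        rw [LinearPMap.blockOffDiag_apply' ⟨_, hzmem⟩ (x := x) (y := 0) rfl rfl] at this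
        rw [WithLp.prod_inner_apply, WithLp.prod_inner_apply] at this
        simpa using this
      have hsndmem : (w : WithLp 2 (E × F)).snd ∈ T†.domain :=
        LinearPMap.mem_adjoint_domain_of_exists _ ⟨p.fst, hi⟩
      have hsndval : T† ⟨(w : WithLp 2 (E × F)).snd, hsndmem⟩ = p.fst :=
        LinearPMap.adjoint_apply_eq hT _ hi
      -- (ii) fst component
      have hii : ∀ y : T†.domain, ⟪(y : F), p.snd⟫ = ⟪((T† y : E) : E), (w : WithLp 2 (E × F)).fst⟫ := by
        intro y
        have hzmem : ((WithLp.equiv 2 (E × F)).symm ((0 : E), (y : F)))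
            ∈ (T.blockOffDiag T†).domain := ⟨Submodule.zero_mem _, y.2⟩
        have := hform ⟨_, hzmem⟩
        rw [LinearPMap.blockOffDiag_apply' ⟨_, hzmem⟩ (x := 0) (y := y) rfl rfl] at this
        rw [WithLp.prod_inner_apply, WithLp.prod_inner_apply] at this
        simp only [LinearPMap.map_zero, inner_zero_right, inner_zero_left, add_zero, zero_add] at this
        have h5 : ⟪p.snd, (y : F)⟫ = ⟪(w : WithLp 2 (E × F)).fst, (T† y : E)⟫ := by simpa using this
        rw [← inner_conj_symm, h5, inner_conj_symm]
      have hgr := aux_vonNeumann hT hcl hii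
      have hfstmem : (w : WithLp 2 (E × F)).fst ∈ T.closure.domain :=
        LinearPMap.mem_domain_of_mem_graph hgr
      have hfstval : T.closure ⟨(w : WithLp 2 (E × F)).fst, hfstmem⟩ = p.snd :=
        ((LinearPMap.image_iff hfstmem).mpr hgr).symm
      exact ⟨hfstmem, hsndmem, hfstval, hsndval⟩
    refine ⟨fun w hw => ?_, fun w w' hww' => ?_⟩
    · obtain ⟨h1, h2, -, -⟩ := hkey ⟨w, hw⟩
      exact ⟨h1, h2⟩
    · obtain ⟨h1, h2, hv1, hv2⟩ := hkey w
      rw [LinearPMap.blockOffDiag_apply]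
      have e1 : (w' : WithLp 2 (E × F)).fst = (w : WithLp 2 (E × F)).fst := by rw [hww']
      have e2 : (w' : WithLp 2 (E × F)).snd = (w : WithLp 2 (E × F)).snd := by rw [hww']
      have hsub1 : (⟨(w' : WithLp 2 (E × F)).snd, w'.2.2⟩ : T†.domain)
          = ⟨(w : WithLp 2 (E × F)).snd, h2⟩ := Subtype.ext e2
      have hsub2 : (⟨(w' : WithLp 2 (E × F)).fst, w'.2.1⟩ : T.closure.domain)
          = ⟨(w : WithLp 2 (E × F)).fst, h1⟩ := Subtype.ext e1
      rw [hsub1, hsub2, hv1, hv2]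
      rfl
  · -- R ≤ S†
    have hform : (T.blockOffDiag T†).IsFormalAdjoint (T.closure.blockOffDiag T†) := by
      intro zz ww
      rw [LinearPMap.blockOffDiag_apply, LinearPMap.blockOffDiag_apply,
        WithLp.prod_inner_apply, WithLp.prod_inner_apply]
      have hA : ⟪((T† ⟨(zz : WithLp 2 (E × F)).snd, zz.2.2⟩ : E) : E),
          (ww : WithLp 2 (E × F)).fst⟫
          = ⟪((zz : WithLp 2 (E × F)).snd : F), T.closure ⟨(ww : WithLp 2 (E × F)).fst, ww.2.1⟩⟫ :=
        aux_inner_adjoint_closure hT hcl ⟨(zz : WithLp 2 (E × F)).snd, zz.2.2⟩ ⟨(ww : WithLp 2 (E × F)).fst, ww.2.1⟩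
      have hB : ⟪(T ⟨(zz : WithLp 2 (E × F)).fst, zz.2.1⟩ : F), (ww : WithLp 2 (E × F)).snd⟫
          = ⟪((zz : WithLp 2 (E × F)).fst : E), (T† ⟨(ww : WithLp 2 (E × F)).snd, ww.2.2⟩ : E)⟫ := by
        have h6 := LinearPMap.adjoint_isFormalAdjoint hT ⟨(ww : WithLp 2 (E × F)).snd, ww.2.2⟩
          ⟨(zz : WithLp 2 (E × F)).fst, zz.2.1⟩
        have h7 : ⟪((zz : WithLp 2 (E × F)).fst : E), (T† ⟨(ww : WithLp 2 (E × F)).snd, ww.2.2⟩ : E)⟫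
            = (starRingEnd ℂ) ⟪(T† ⟨(ww : WithLp 2 (E × F)).snd, ww.2.2⟩ : E), (zz : WithLp 2 (E × F)).fst⟫ :=
          (inner_conj_symm _ _).symm
        rw [h7, h6, inner_conj_symm]
      have hfst : ((WithLp.equiv 2 (E × F)).symm
          ((T† ⟨(zz : WithLp 2 (E × F)).snd, zz.2.2⟩ : E), (T ⟨(zz : WithLp 2 (E × F)).fst, zz.2.1⟩ : F))).fst
          = (T† ⟨(zz : WithLp 2 (E × F)).snd, zz.2.2⟩ : E) := rfl
      have hsnd : ((WithLp.equiv 2 (E × F)).symm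
          ((T† ⟨(zz : WithLp 2 (E × F)).snd, zz.2.2⟩ : E), (T ⟨(zz : WithLp 2 (E × F)).fst, zz.2.1⟩ : F))).snd
          = (T ⟨(zz : WithLp 2 (E × F)).fst, zz.2.1⟩ : F) := rfl
      have hfst' : ((WithLp.equiv 2 (E × F)).symm
          ((T† ⟨(ww : WithLp 2 (E × F)).snd, ww.2.2⟩ : E), (T.closure ⟨(ww : WithLp 2 (E × F)).fst, ww.2.1⟩ : F))).fst
          = (T† ⟨(ww : WithLp 2 (E × F)).snd, ww.2.2⟩ : E) := rfl
      have hsnd' : ((WithLp.equiv 2 (E × F)).symm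
          ((T† ⟨(ww : WithLp 2 (E × F)).snd, ww.2.2⟩ : E), (T.closure ⟨(ww : WithLp 2 (E × F)).fst, ww.2.1⟩ : F))).snd
          = (T.closure ⟨(ww : WithLp 2 (E × F)).fst, ww.2.1⟩ : F) := rfl
      change ⟪((T† ⟨(zz : WithLp 2 (E × F)).snd, zz.2.2⟩ : E) : E), (ww : WithLp 2 (E × F)).fst⟫
          + ⟪(T ⟨(zz : WithLp 2 (E × F)).fst, zz.2.1⟩ : F), (ww : WithLp 2 (E × F)).snd⟫
          = ⟪((zz : WithLp 2 (E × F)).fst : E), (T† ⟨(ww : WithLp 2 (E × F)).snd, ww.2.2⟩ : E)⟫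
          + ⟪((zz : WithLp 2 (E × F)).snd : F), T.closure ⟨(ww : WithLp 2 (E × F)).fst, ww.2.1⟩⟫
      rw [hA, hB]
      exact add_comm _ _
    exact hform.le_adjoint hS

end XX

theorem stmt_8 {E F : Type*}
    [NormedAddCommGroup E] [InnerProductSpace ℂ E] [CompleteSpace E]
    [NormedAddCommGroup F] [InnerProductSpace ℂ F] [CompleteSpace F]
    (T : E →ₗ.[ℂ] F)
    (hT : Dense (T.domain : Set E))
    (hcl : T.IsClosable) :
    (T.blockOffDiag T.adjoint).pcomp (T.blockOffDiag T.adjoint).adjoint =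
      LinearPMap.blockDiag (T.adjoint.pcomp T.closure) (T.pcomp T.adjoint) := by
  rw [aux_adjoint_eq hT hcl]
  exact aux_pcomp_block T T.closure T.adjoint
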